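/- Let n ∈ ℕ, n ≥ 2, and let A be the weighted Neumann graph Laplacian on {0,…,n−1}³ defined in the context. Then for every f : {0,…,n−1}³ → ℝ with Σ_{k} f(k) = 0, one has Σ_{k} f(k) (A f)(k) ≥ ((1 − cos(π/n))/2) Σ_{k} f(k)². (Spectral gap of A above the constant functions.) -/
import Mathlib


open Real

/-- Coordinatewise reflection: maps `−1` to `0`, `n` to `n−1`, and fixes everything else. -/
def reflect (n : ℕ) (z : ℤ) : ℤ :=
  if z = -1 then 0 else if z = (n : ℤ) then (n : ℤ) - 1 else z

/-- The weighted Neumann graph Laplacian on `{0,…,n−1}³`: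
`(A f)(k) = (1/16) Σ_{ε ∈ {−1,0,1}³, ε ≠ 0} 2^{1−|ε|₁} (f(k) − f(ρ(k+ε)))`. -/
noncomputable def graphLap (n : ℕ) (f : (Fin 3 → ℤ) → ℝ) (k : Fin 3 → ℤ) : ℝ :=
  (1 / 16) * ∑ ε ∈ (Finset.Icc (fun _ => (-1 : ℤ)) (fun _ => (1 : ℤ))).erase 0,
    (2 : ℝ) ^ ((1 : ℤ) - ∑ i, |ε i|) * (f k - f (fun i => reflect n (k i + ε i)))

noncomputable def wt (m : ℕ) : ℝ := if m = 0 then 1 else 2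
noncomputable def ev (n m : ℕ) (j : ℤ) : ℝ := Real.cos (π*m*(2*j+1)/(2*n))
noncomputable def lam (n m : ℕ) : ℝ := (1 + Real.cos (π*m/n))/2
noncomputable def E (n : ℕ) (μ : Fin 3 → ℕ) (k : Fin 3 → ℤ) : ℝ := ∏ i, ev n (μ i) (k i)


lemma wt_pos (m : ℕ) : 0 < wt m := by unfold wt; split <;> norm_num

lemma sum_wt_cos {n : ℕ} (hn : 1 ≤ n) (t : ℤ) (h : Real.sin (π*t/(2*n)) ≠ 0) :
    ∑ m ∈ Finset.range n, wt m * Real.cos (π*m*t/n) = -Real.cos (π*t) := by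
  have hn' : (n:ℝ) ≠ 0 := Nat.cast_ne_zero.2 (by omega)
  set θ : ℝ := π*t/n with hθ
  have hhalf : π*t/(2*n) = θ/2 := by rw [hθ]; ring
  rw [hhalf] at h
  have harg : ∀ m : ℕ, π*m*t/n = m*θ := by intro m; rw [hθ]; ring
  have tele := Finset.sum_range_sub (fun m : ℕ => Real.sin (m*θ - θ/2)) n
  have step : ∀ m : ℕ, Real.sin ((m+1:ℕ)*θ - θ/2) - Real.sin (m*θ - θ/2)
      = 2 * Real.sin (θ/2) * Real.cos (m*θ) := by
    intro m
    have h1 : ((m+1:ℕ):ℝ)*θ - θ/2 = m*θ + θ/2 := by push_cast; ring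
    rw [h1, Real.sin_add, Real.sin_sub]; ring
  simp only [step, Nat.cast_zero, zero_mul, zero_sub, Real.sin_neg] at tele
  have key : (2 * Real.sin (θ/2)) * ∑ m ∈ Finset.range n, Real.cos (m*θ)
      = Real.sin (n*θ - θ/2) + Real.sin (θ/2) := by
    rw [Finset.mul_sum, tele]; ring
  have hsin : Real.sin ((n:ℝ)*θ - θ/2) = -Real.cos (π*t) * Real.sin (θ/2) := by
    have hnθ : (n:ℝ)*θ = π*t := by rw [hθ]; field_simp
    rw [hnθ, Real.sin_sub, show π*(t:ℝ) = (t:ℝ)*π by ring, Real.sin_int_mul_pi,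
      show Real.cos ((t:ℝ)*π) = Real.cos (π*t) by ring_nf]
    ring
  have hsplit : ∑ m ∈ Finset.range n, wt m * Real.cos (π*m*t/n)
      = 2 * (∑ m ∈ Finset.range n, Real.cos (m*θ)) - 1 := by
    have hterm : ∀ m : ℕ, wt m * Real.cos (π*m*t/n)
        = 2 * Real.cos (m*θ) - (if m = 0 then Real.cos (m*θ) else 0) := by
      intro m
      rw [harg m]; unfold wt
      by_cases hm : m = 0 <;> simp [hm] <;> ring
    rw [Finset.sum_congr rfl (fun m _ => hterm m), Finset.sum_sub_distrib,
      Finset.sum_ite_eq' (Finset.range n) 0 (fun m : ℕ => Real.cos (m*θ)),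
      Finset.mul_sum]
    have hpos : 0 < n := hn
    simp [Finset.mem_range, hpos]
  have h2 : 2 * Real.sin (θ/2) ≠ 0 := mul_ne_zero two_ne_zero h
  have hS : ∑ m ∈ Finset.range n, Real.cos (m*θ) = (1 - Real.cos (π*t))/2 := by
    apply mul_left_cancel₀ h2
    rw [key, hsin]; ring
  rw [hsplit, hS]; ring

lemma sin_ne {n : ℕ} (hn : 1 ≤ n) {t : ℤ} (ht0 : t ≠ 0) (ht : |t| < 2*n) :
    Real.sin (π*t/(2*n)) ≠ 0 := by
  have hn' : (0:ℝ) < n := by exact_mod_cast Nat.pos_of_ne_zero (by omega)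
  have key : ∀ s : ℤ, 0 < s → |s| < 2*n → Real.sin (π*s/(2*n)) ≠ 0 := by
    intro s hs hsb
    have h1 : (0:ℝ) < π*s/(2*n) := by
      apply div_pos (mul_pos pi_pos (by exact_mod_cast hs)) (by linarith)
    have h2 : π*s/(2*n) < π := by
      rw [div_lt_iff₀ (by linarith)]
      have : (s:ℝ) < 2*n := by exact_mod_cast (abs_lt.1 hsb).2
      nlinarith [pi_pos]
    exact (Real.sin_pos_of_pos_of_lt_pi h1 h2).ne'
  rcases ht0.lt_or_gt with h | h
  · have := key (-t) (by omega) (by rwa [abs_neg])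
    intro hc; apply this
    rw [show π*((-t:ℤ):ℝ)/(2*n) = -(π*t/(2*n)) by push_cast; ring, Real.sin_neg, hc, neg_zero]
  · exact key t h ht

lemma sum_wt (n : ℕ) (hn : 1 ≤ n) : ∑ m ∈ Finset.range n, wt m = 2*n - 1 := by
  have hterm : ∀ m : ℕ, wt m = 2 - (if m = 0 then (1:ℝ) else 0) := by
    intro m; unfold wt; by_cases hm : m = 0 <;> simp [hm] <;> norm_num
  rw [Finset.sum_congr rfl (fun m _ => hterm m), Finset.sum_sub_distrib,
    Finset.sum_ite_eq' (Finset.range n) 0 (fun _ : ℕ => (1:ℝ))]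
  have hpos : 0 < n := hn
  simp [Finset.mem_range, hpos, mul_comm]

lemma kernel {n : ℕ} (hn : 1 ≤ n) {j j' : ℤ} (hj0 : 0 ≤ j) (hj1 : j ≤ (n:ℤ)-1)
    (hj0' : 0 ≤ j') (hj1' : j' ≤ (n:ℤ)-1) :
    ∑ m ∈ Finset.range n, wt m * (ev n m j * ev n m j') = if j = j' then (n:ℝ) else 0 := by
  have hn' : (n:ℝ) ≠ 0 := Nat.cast_ne_zero.2 (by omega)
  have hprod : ∀ m : ℕ, ev n m j * ev n m j'
      = (Real.cos (π*m*((j+j'+1 : ℤ):ℝ)/n) + Real.cos (π*m*((j-j' : ℤ):ℝ)/n))/2 := by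
    intro m
    unfold ev
    set a := π*m*(2*j+1)/(2*n)
    set b := π*m*(2*j'+1)/(2*n)
    have ha : π*m*((j+j'+1 : ℤ):ℝ)/n = a + b := by simp only [a, b]; push_cast; field_simp; ring
    have hb : π*m*((j-j' : ℤ):ℝ)/n = a - b := by simp only [a, b]; push_cast; field_simp; ring
    rw [ha, hb, Real.cos_add, Real.cos_sub]; ring
  have hsplit : ∑ m ∈ Finset.range n, wt m * (ev n m j * ev n m j')
      = ((∑ m ∈ Finset.range n, wt m * Real.cos (π*m*((j+j'+1:ℤ):ℝ)/n))
        + (∑ m ∈ Finset.range n, wt m * Real.cos (π*m*((j-j':ℤ):ℝ)/n)))/2 := by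
    rw [← Finset.sum_add_distrib, Finset.sum_div]
    exact Finset.sum_congr rfl (fun m _ => by rw [hprod m]; ring)
  have hs1 : ∑ m ∈ Finset.range n, wt m * Real.cos (π*m*((j+j'+1:ℤ):ℝ)/n)
      = -Real.cos (π*((j+j'+1:ℤ):ℝ)) :=
    sum_wt_cos hn _ (sin_ne hn (by omega) (by rw [abs_of_pos (by omega)]; omega))
  by_cases hjj : j = j'
  · subst hjj
    have hs2 : ∑ m ∈ Finset.range n, wt m * Real.cos (π*m*((j-j:ℤ):ℝ)/n) = 2*n-1 := by
      have : ∀ m : ℕ, Real.cos (π*m*((j-j:ℤ):ℝ)/n) = 1 := by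
        intro m; simp
      rw [Finset.sum_congr rfl (fun m _ => by rw [this m, mul_one]), sum_wt n hn]
    have hcos : Real.cos (π*((j+j+1:ℤ):ℝ)) = -1 := by
      rw [show π*((j+j+1:ℤ):ℝ) = π + j*(2*π) by push_cast; ring,
        Real.cos_add_int_mul_two_pi, Real.cos_pi]
    rw [hsplit, hs1, hs2, hcos, if_pos rfl]; ring
  · have hs2 : ∑ m ∈ Finset.range n, wt m * Real.cos (π*m*((j-j':ℤ):ℝ)/n)
        = -Real.cos (π*((j-j':ℤ):ℝ)) :=
      sum_wt_cos hn _ (sin_ne hn (by omega) (by rw [abs_lt]; omega))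
    have hopp : Real.cos (π*((j+j'+1:ℤ):ℝ)) = -Real.cos (π*((j-j':ℤ):ℝ)) := by
      rw [show π*((j+j'+1:ℤ):ℝ) = (π*((j-j':ℤ):ℝ) + π) + j'*(2*π) by push_cast; ring,
        Real.cos_add_int_mul_two_pi, Real.cos_add, Real.cos_pi, Real.sin_pi]
      ring
    rw [hsplit, hs1, hs2, hopp, if_neg hjj]; ring

lemma cos_sum_aux (x d : ℝ) : Real.cos (x - d) + Real.cos (x + d) = 2 * Real.cos d * Real.cos x := by
  rw [Real.cos_sub, Real.cos_add]; ring

lemma reflect_mem {n : ℕ} (hn : 1 ≤ n) {z : ℤ} (h0 : -1 ≤ z) (h1 : z ≤ n) :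
    0 ≤ reflect n z ∧ reflect n z ≤ (n:ℤ) - 1 := by
  have : 1 ≤ (n:ℤ) := by exact_mod_cast hn
  unfold reflect
  split
  · omega
  · split <;> omega

lemma ev_reflect {n : ℕ} (hn : 2 ≤ n) (m : ℕ) {j : ℤ} (h0 : 0 ≤ j) (h1 : j ≤ (n:ℤ)-1) :
    ev n m (reflect n (j-1)) + ev n m (reflect n (j+1))
      = 2 * Real.cos (π*m/n) * ev n m j := by
  have hn2 : (2:ℤ) ≤ (n:ℤ) := by exact_mod_cast hn
  have hn' : (n:ℝ) ≠ 0 := Nat.cast_ne_zero.2 (by omega)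
  by_cases hj0 : j = 0
  · subst hj0
    have hr1 : reflect n (0-1) = 0 := by unfold reflect; norm_num
    have hr2 : reflect n (0+1) = 1 := by unfold reflect; split; · omega
                                         split <;> omega
    rw [hr1, hr2]; unfold ev; push_cast
    have key := cos_sum_aux (π*m/(2*n)) (π*m/n)
    rw [show π*(m:ℝ)/(2*n) - π*m/n = -(π*m/(2*n)) by field_simp; ring, Real.cos_neg] at key
    rw [show π*(m:ℝ)*(2*0+1)/(2*n) = π*m/(2*n) by ring,
      show π*(m:ℝ)*(2*1+1)/(2*n) = π*m/(2*n) + π*m/n by field_simp; ring]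
    linarith
  · by_cases hj1 : j = (n:ℤ)-1
    · subst hj1
      have hr1 : reflect n ((n:ℤ)-1-1) = (n:ℤ)-2 := by unfold reflect; split; · omega
                                                       split <;> omega
      have hr2 : reflect n ((n:ℤ)-1+1) = (n:ℤ)-1 := by unfold reflect; split; · omega
                                                       split <;> omega
      rw [hr1, hr2]; unfold ev; push_cast
      have key := cos_sum_aux (π*m*(2*((n:ℝ)-1)+1)/(2*n)) (π*m/n)
      have hxd : Real.cos (π*m*(2*((n:ℝ)-1)+1)/(2*n) + π*m/n)
          = Real.cos (π*m*(2*((n:ℝ)-1)+1)/(2*n)) := by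
        rw [show π*(m:ℝ)*(2*((n:ℝ)-1)+1)/(2*n) + π*m/n = m*π + π*m/(2*n) by field_simp; ring,
          show π*(m:ℝ)*(2*((n:ℝ)-1)+1)/(2*n) = m*π - π*m/(2*n) by field_simp; ring,
          Real.cos_add, Real.cos_sub, Real.sin_nat_mul_pi]
        ring
      rw [hxd] at key
      rw [show π*(m:ℝ)*(2*((n:ℝ)-2)+1)/(2*n)
          = π*m*(2*((n:ℝ)-1)+1)/(2*n) - π*m/n by field_simp; ring]
      linarith
    · have hr1 : reflect n (j-1) = j-1 := by unfold reflect; split; · omega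
                                             split <;> omega
      have hr2 : reflect n (j+1) = j+1 := by unfold reflect; split; · omega
                                             split <;> omega
      rw [hr1, hr2]; unfold ev; push_cast
      have key := cos_sum_aux (π*m*(2*(j:ℝ)+1)/(2*n)) (π*m/n)
      rw [show π*(m:ℝ)*(2*((j:ℝ)-1)+1)/(2*n) = π*m*(2*(j:ℝ)+1)/(2*n) - π*m/n by
          field_simp; ring,
        show π*(m:ℝ)*(2*((j:ℝ)+1)+1)/(2*n) = π*m*(2*(j:ℝ)+1)/(2*n) + π*m/n by
          field_simp; ring]
      linarith

lemma ev_step {n : ℕ} (hn : 2 ≤ n) (m : ℕ) {j : ℤ} (h0 : 0 ≤ j) (h1 : j ≤ (n:ℤ)-1) :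
    ∑ z ∈ Finset.Icc (-1:ℤ) 1, (2:ℝ)^(-|z|) * ev n m (reflect n (j+z))
      = 2 * lam n m * ev n m j := by
  have hIcc : Finset.Icc (-1:ℤ) 1 = {-1, 0, 1} := by decide
  have hrj : reflect n j = j := by
    unfold reflect; split; · omega
    split <;> omega
  rw [hIcc]
  rw [Finset.sum_insert (by decide), Finset.sum_insert (by decide), Finset.sum_singleton]
  have := ev_reflect hn m h0 h1
  rw [show j + -1 = j - 1 by ring, add_zero, hrj]
  unfold lam
  simp only [abs_neg, abs_one, abs_zero, neg_zero, zpow_zero, one_mul]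
  rw [show ((2:ℝ)^(-(1:ℤ))) = 1/2 by norm_num]
  linarith

lemma reflect_eq_self {n : ℕ} (hn : 2 ≤ n) {j : ℤ} (h0 : 0 ≤ j) (h1 : j ≤ (n:ℤ)-1) :
    reflect n j = j := by
  have : 2 ≤ (n:ℤ) := by exact_mod_cast hn
  unfold reflect
  split
  · omega
  · split <;> omega


lemma graphLap_E {n : ℕ} (hn : 2 ≤ n) (μ : Fin 3 → ℕ) {k : Fin 3 → ℤ}
    (hk : ∀ i, 0 ≤ k i ∧ k i ≤ (n:ℤ)-1) :
    graphLap n (E n μ) k = (1 - ∏ i, lam n (μ i)) * E n μ k := by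
  unfold graphLap
  have hw : ∀ ε : Fin 3 → ℤ, (2:ℝ)^((1:ℤ) - ∑ i, |ε i|) = 2 * ∏ i, (2:ℝ)^(-|ε i|) := by
    intro ε
    rw [Fin.sum_univ_three, Fin.prod_univ_three,
      show (1:ℤ) - (|ε 0| + |ε 1| + |ε 2|) = 1 + -|ε 0| + -|ε 1| + -|ε 2| by ring,
      zpow_add₀ (two_ne_zero (α := ℝ)), zpow_add₀ (two_ne_zero (α := ℝ)),
      zpow_add₀ (two_ne_zero (α := ℝ)), zpow_one]
    ring
  have hzero : (2:ℝ)^((1:ℤ) - ∑ i, |(0 : Fin 3 → ℤ) i|)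
      * (E n μ k - E n μ (fun i => reflect n (k i + (0 : Fin 3 → ℤ) i))) = 0 := by
    have : (fun i => reflect n (k i + (0 : Fin 3 → ℤ) i)) = k := by
      funext i
      simp only [Pi.zero_apply, add_zero]
      exact reflect_eq_self hn (hk i).1 (hk i).2
    rw [this]; simp
  have herase : ∑ ε ∈ (Finset.Icc (fun _ => (-1 : ℤ)) (fun _ => (1 : ℤ))).erase 0,
      (2 : ℝ) ^ ((1 : ℤ) - ∑ i, |ε i|) * (E n μ k - E n μ (fun i => reflect n (k i + ε i)))
      = ∑ ε ∈ Finset.Icc (fun _ => (-1 : ℤ)) (fun _ => (1 : ℤ)),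
      (2 : ℝ) ^ ((1 : ℤ) - ∑ i, |ε i|) * (E n μ k - E n μ (fun i => reflect n (k i + ε i))) :=
    Finset.sum_erase _ hzero
  rw [herase]
  have hIcc3 : Finset.Icc (fun _ => (-1 : ℤ)) (fun _ => (1 : ℤ))
      = Fintype.piFinset (fun _ : Fin 3 => Finset.Icc (-1:ℤ) 1) := by
    exact Pi.Icc_eq (ι := Fin 3) (α := fun _ => ℤ) (fun _ => (-1:ℤ)) (fun _ => (1:ℤ))
  have h1d : ∑ z ∈ Finset.Icc (-1:ℤ) 1, (2:ℝ)^(-|z|) = 2 := by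
    rw [show Finset.Icc (-1:ℤ) 1 = {-1, 0, 1} by decide,
      Finset.sum_insert (by decide), Finset.sum_insert (by decide), Finset.sum_singleton]
    norm_num
  have hsum1 : ∑ ε ∈ Finset.Icc (fun _ : Fin 3 => (-1 : ℤ)) (fun _ => (1 : ℤ)),
      ((2:ℝ)^((1:ℤ) - ∑ i, |ε i|)) = 16 := by
    rw [Finset.sum_congr rfl (fun ε _ => hw ε), ← Finset.mul_sum, hIcc3,
      ← Finset.prod_univ_sum (fun _ : Fin 3 => Finset.Icc (-1:ℤ) 1) (fun _ z => (2:ℝ)^(-|z|))]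
    simp only [h1d]
    norm_num [Fin.prod_univ_three]
  have hsum2 : ∑ ε ∈ Finset.Icc (fun _ => (-1 : ℤ)) (fun _ => (1 : ℤ)),
      ((2:ℝ)^((1:ℤ) - ∑ i, |ε i|)) * E n μ (fun i => reflect n (k i + ε i))
      = 16 * (∏ i, lam n (μ i)) * E n μ k := by
    have hterm : ∀ ε : Fin 3 → ℤ,
        ((2:ℝ)^((1:ℤ) - ∑ i, |ε i|)) * E n μ (fun i => reflect n (k i + ε i))
        = 2 * ∏ i, ((2:ℝ)^(-|ε i|) * ev n (μ i) (reflect n (k i + ε i))) := by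
      intro ε
      rw [hw ε]
      unfold E
      rw [Finset.prod_mul_distrib]
      ring
    rw [Finset.sum_congr rfl (fun ε _ => hterm ε), hIcc3, ← Finset.mul_sum,
      ← Finset.prod_univ_sum (fun _ : Fin 3 => Finset.Icc (-1:ℤ) 1)
        (fun i z => (2:ℝ)^(-|z|) * ev n (μ i) (reflect n (k i + z)))]
    have hfac : ∀ i : Fin 3, ∑ z ∈ Finset.Icc (-1:ℤ) 1,
        (2:ℝ)^(-|z|) * ev n (μ i) (reflect n (k i + z))
        = 2 * lam n (μ i) * ev n (μ i) (k i) :=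
      fun i => ev_step hn (μ i) (hk i).1 (hk i).2
    rw [Finset.prod_congr rfl (fun i _ => hfac i)]
    unfold E
    rw [Fin.prod_univ_three, Fin.prod_univ_three, Fin.prod_univ_three]
    ring
  rw [Finset.sum_congr rfl (fun ε _ => mul_sub _ _ _), Finset.sum_sub_distrib,
    ← Finset.sum_mul, hsum1, hsum2]
  ring

lemma graphLap_congr {n : ℕ} (hn : 2 ≤ n) {f g : (Fin 3 → ℤ) → ℝ} {k : Fin 3 → ℤ}
    (hk : ∀ i, 0 ≤ k i ∧ k i ≤ (n:ℤ)-1)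
    (hfg : ∀ x : Fin 3 → ℤ, (∀ i, 0 ≤ x i ∧ x i ≤ (n:ℤ)-1) → f x = g x) :
    graphLap n f k = graphLap n g k := by
  unfold graphLap
  congr 1
  apply Finset.sum_congr rfl
  intro ε hε
  have hε' := Finset.mem_Icc.1 (Finset.mem_of_mem_erase hε)
  have hbound : ∀ i, 0 ≤ reflect n (k i + ε i) ∧ reflect n (k i + ε i) ≤ (n:ℤ)-1 := by
    intro i
    have h1 : (-1:ℤ) ≤ ε i := hε'.1 i
    have h2 : ε i ≤ 1 := hε'.2 i
    exact reflect_mem (by omega) (by have := (hk i).1; omega)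
      (by have := (hk i).2; omega)
  rw [hfg k hk, hfg _ hbound]

lemma graphLap_sum {n : ℕ} {ι : Type*} (M : Finset ι) (g : ι → (Fin 3 → ℤ) → ℝ)
    (k : Fin 3 → ℤ) :
    graphLap n (fun x => ∑ μ ∈ M, g μ x) k = ∑ μ ∈ M, graphLap n (g μ) k := by
  unfold graphLap
  rw [← Finset.mul_sum, Finset.sum_comm]
  congr 1
  apply Finset.sum_congr rfl
  intro ε _
  rw [← Finset.sum_sub_distrib, Finset.mul_sum]

lemma graphLap_smul {n : ℕ} (c : ℝ) (g : (Fin 3 → ℤ) → ℝ) (k : Fin 3 → ℤ) :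
    graphLap n (fun x => c * g x) k = c * graphLap n g k := by
  unfold graphLap
  have hpt : ∀ ε : Fin 3 → ℤ, (2:ℝ)^((1:ℤ) - ∑ i, |ε i|) * (c * g k - c * g (fun i => reflect n (k i + ε i)))
      = c * ((2:ℝ)^((1:ℤ) - ∑ i, |ε i|) * (g k - g (fun i => reflect n (k i + ε i)))) := by
    intro ε; ring
  rw [Finset.sum_congr rfl (fun ε _ => hpt ε), ← Finset.mul_sum]
  ring

lemma recon {n : ℕ} (hn : 2 ≤ n) (f : (Fin 3 → ℤ) → ℝ) {k : Fin 3 → ℤ}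
    (hk : ∀ i, 0 ≤ k i ∧ k i ≤ (n:ℤ)-1)
    (hkB : k ∈ Finset.Icc (0 : Fin 3 → ℤ) (fun _ => (n : ℤ) - 1)) :
    ∑ μ ∈ Fintype.piFinset (fun _ : Fin 3 => Finset.range n),
      ((∏ i, (wt (μ i)/(n:ℝ))) * ∑ k' ∈ Finset.Icc (0 : Fin 3 → ℤ) (fun _ => (n : ℤ) - 1),
        f k' * E n μ k') * E n μ k = f k := by
  have hn' : (n:ℝ) ≠ 0 := Nat.cast_ne_zero.2 (by omega)
  have hterm : ∀ μ : Fin 3 → ℕ,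
      ((∏ i, (wt (μ i)/(n:ℝ))) * ∑ k' ∈ Finset.Icc (0 : Fin 3 → ℤ) (fun _ => (n : ℤ) - 1),
        f k' * E n μ k') * E n μ k
      = ∑ k' ∈ Finset.Icc (0 : Fin 3 → ℤ) (fun _ => (n : ℤ) - 1),
        f k' * ∏ i, ((wt (μ i)/(n:ℝ)) * (ev n (μ i) (k' i) * ev n (μ i) (k i))) := by
    intro μ
    have hpt : ∀ k' : Fin 3 → ℤ,
        f k' * ∏ i, ((wt (μ i)/(n:ℝ)) * (ev n (μ i) (k' i) * ev n (μ i) (k i)))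
        = ((∏ i, (wt (μ i)/(n:ℝ))) * (f k' * E n μ k')) * E n μ k := by
      intro k'
      unfold E
      rw [Finset.prod_mul_distrib, Finset.prod_mul_distrib]
      ring
    rw [Finset.sum_congr rfl (fun k' _ => hpt k'), ← Finset.sum_mul, ← Finset.mul_sum]
  rw [Finset.sum_congr rfl (fun μ _ => hterm μ), Finset.sum_comm]
  have hinner : ∀ k' : Fin 3 → ℤ, k' ∈ Finset.Icc (0 : Fin 3 → ℤ) (fun _ => (n : ℤ) - 1) →
      ∑ μ ∈ Fintype.piFinset (fun _ : Fin 3 => Finset.range n),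
        f k' * ∏ i, ((wt (μ i)/(n:ℝ)) * (ev n (μ i) (k' i) * ev n (μ i) (k i)))
      = f k' * (if k' = k then 1 else 0) := by
    intro k' hk'
    have hk'b := Finset.mem_Icc.1 hk'
    rw [← Finset.mul_sum,
      ← Finset.prod_univ_sum (fun _ : Fin 3 => Finset.range n)
        (fun i m => (wt m/(n:ℝ)) * (ev n m (k' i) * ev n m (k i)))]
    congr 1
    have hcoord : ∀ i : Fin 3, ∑ m ∈ Finset.range n,
        (wt m/(n:ℝ)) * (ev n m (k' i) * ev n m (k i))
        = if k' i = k i then 1 else 0 := by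
      intro i
      have : ∑ m ∈ Finset.range n, (wt m/(n:ℝ)) * (ev n m (k' i) * ev n m (k i))
          = (∑ m ∈ Finset.range n, wt m * (ev n m (k' i) * ev n m (k i)))/(n:ℝ) := by
        rw [Finset.sum_div]
        exact Finset.sum_congr rfl (fun m _ => by ring)
      rw [this, kernel (by omega) (hk'b.1 i) (hk'b.2 i) (hk i).1 (hk i).2]
      split <;> simp [hn']
    rw [Finset.prod_congr rfl (fun i _ => hcoord i)]
    by_cases hkk : k' = k
    · subst hkk; simp
    · rw [if_neg hkk]
      obtain ⟨i, hi⟩ := Function.ne_iff.1 hkk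
      exact Finset.prod_eq_zero (Finset.mem_univ i) (if_neg hi)
  rw [Finset.sum_congr rfl hinner]
  simp only [mul_ite, mul_one, mul_zero]
  rw [Finset.sum_ite_eq' _ k f]
  simp [hkB]

lemma lam_bounds {n : ℕ} (m : ℕ) : 0 ≤ lam n m ∧ lam n m ≤ 1 := by
  unfold lam
  constructor
  · linarith [Real.neg_one_le_cos (π*m/n)]
  · linarith [Real.cos_le_one (π*m/n)]

lemma lam_le {n : ℕ} (hn : 2 ≤ n) {m : ℕ} (hm1 : 1 ≤ m) (hm2 : m < n) :
    lam n m ≤ (1 + Real.cos (π/n))/2 := by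
  have hn0 : (0:ℝ) < n := by exact_mod_cast Nat.pos_of_ne_zero (by omega)
  have hm : (1:ℝ) ≤ m := by exact_mod_cast hm1
  have hmn : (m:ℝ) ≤ n := by exact_mod_cast hm2.le
  unfold lam
  have h := Real.cos_le_cos_of_nonneg_of_le_pi (x := π/n) (y := π*m/n)
    (by positivity)
    (by rw [div_le_iff₀ hn0]; nlinarith [pi_pos])
    (by rw [div_le_div_iff_of_pos_right hn0]; nlinarith [pi_pos])
  linarith

lemma prod_lam_le {n : ℕ} (hn : 2 ≤ n) {μ : Fin 3 → ℕ} (hμ : ∀ i, μ i < n)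
    (hne : μ ≠ 0) : ∏ i, lam n (μ i) ≤ (1 + Real.cos (π/n))/2 := by
  rw [Fin.prod_univ_three]
  have h0 := lam_bounds (n := n) (μ 0)
  have h1 := lam_bounds (n := n) (μ 1)
  have h2 := lam_bounds (n := n) (μ 2)
  have hcase : μ 0 ≠ 0 ∨ μ 1 ≠ 0 ∨ μ 2 ≠ 0 := by
    by_contra h
    push_neg at h
    apply hne
    funext i
    fin_cases i <;> simp [h.1, h.2.1, h.2.2]
  have hp01 : lam n (μ 0) * lam n (μ 1) ≤ 1 := by nlinarith
  have hp02 : lam n (μ 0) * lam n (μ 2) ≤ 1 := by nlinarith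
  have hp12 : lam n (μ 1) * lam n (μ 2) ≤ 1 := by nlinarith
  have hq01 : 0 ≤ lam n (μ 0) * lam n (μ 1) := mul_nonneg h0.1 h1.1
  have hq02 : 0 ≤ lam n (μ 0) * lam n (μ 2) := mul_nonneg h0.1 h2.1
  have hq12 : 0 ≤ lam n (μ 1) * lam n (μ 2) := mul_nonneg h1.1 h2.1
  rcases hcase with h | h | h
  · have hkey := lam_le hn (by omega) (hμ 0)
    nlinarith
  · have hkey := lam_le hn (by omega) (hμ 1)
    nlinarith
  · have hkey := lam_le hn (by omega) (hμ 2)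
    nlinarith

lemma swap_sums (B : Finset (Fin 3 → ℤ)) (M : Finset (Fin 3 → ℕ)) (f : (Fin 3 → ℤ) → ℝ)
    (a : (Fin 3 → ℕ) → ℝ) (Ef : (Fin 3 → ℕ) → (Fin 3 → ℤ) → ℝ) :
    ∑ k ∈ B, f k * ∑ μ ∈ M, a μ * Ef μ k = ∑ μ ∈ M, a μ * ∑ k ∈ B, f k * Ef μ k := by
  simp only [Finset.mul_sum]
  rw [Finset.sum_comm]
  exact Finset.sum_congr rfl (fun μ _ => Finset.sum_congr rfl (fun k _ => by ring))

/-- Spectral gap of the weighted Neumann graph Laplacian above the constants: if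
`Σ_k f(k) = 0` then `⟨f, A f⟩ ≥ ((1 − cos(π/n))/2) ‖f‖²`. -/
theorem graphLap_gap (n : ℕ) (hn : 2 ≤ n) (f : (Fin 3 → ℤ) → ℝ)
    (hf : (∑ k ∈ Finset.Icc (0 : Fin 3 → ℤ) (fun _ => (n : ℤ) - 1), f k) = 0) :
    (∑ k ∈ Finset.Icc (0 : Fin 3 → ℤ) (fun _ => (n : ℤ) - 1), f k * graphLap n f k)
      ≥ (1 - Real.cos (π / n)) / 2 *
        ∑ k ∈ Finset.Icc (0 : Fin 3 → ℤ) (fun _ => (n : ℤ) - 1), (f k) ^ 2 := by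
  have hn0 : (0:ℝ) < n := by exact_mod_cast Nat.pos_of_ne_zero (by omega)
  set B := Finset.Icc (0 : Fin 3 → ℤ) (fun _ => (n : ℤ) - 1) with hB
  set M := Fintype.piFinset (fun _ : Fin 3 => Finset.range n) with hM
  have hmem : ∀ k ∈ B, ∀ i, 0 ≤ k i ∧ k i ≤ (n:ℤ)-1 := by
    intro k hk i
    have h := Finset.mem_Icc.1 hk
    exact ⟨by simpa using h.1 i, h.2 i⟩
  have hmem' : ∀ k : Fin 3 → ℤ, (∀ i, 0 ≤ k i ∧ k i ≤ (n:ℤ)-1) → k ∈ B := by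
    intro k hk
    rw [hB, Finset.mem_Icc]
    exact ⟨fun i => by simpa using (hk i).1, fun i => (hk i).2⟩
  -- coefficients
  set G : (Fin 3 → ℕ) → ℝ := fun μ => ∑ k' ∈ B, f k' * E n μ k' with hG
  set W : (Fin 3 → ℕ) → ℝ := fun μ => ∏ i, (wt (μ i)/(n:ℝ)) with hW
  have hrecon : ∀ k : Fin 3 → ℤ, (∀ i, 0 ≤ k i ∧ k i ≤ (n:ℤ)-1) →
      f k = ∑ μ ∈ M, (W μ * G μ) * E n μ k := by
    intro k hk
    exact (recon hn f hk (hmem' k hk)).symm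
  have hWpos : ∀ μ, 0 < W μ := by
    intro μ
    exact Finset.prod_pos (fun i _ => div_pos (wt_pos _) hn0)
  -- Step A
  have stepA : ∑ k ∈ B, f k * graphLap n f k
      = ∑ μ ∈ M, ((W μ * G μ) * (1 - ∏ i, lam n (μ i))) * G μ := by
    have h1 : ∀ k ∈ B, f k * graphLap n f k
        = f k * ∑ μ ∈ M, ((W μ * G μ) * (1 - ∏ i, lam n (μ i))) * E n μ k := by
      intro k hk
      congr 1
      rw [graphLap_congr hn (hmem k hk) (fun x hx => hrecon x hx)]
      rw [graphLap_sum M (fun μ x => (W μ * G μ) * E n μ x) k]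
      apply Finset.sum_congr rfl
      intro μ _
      rw [graphLap_smul (W μ * G μ) (E n μ) k, graphLap_E hn μ (hmem k hk)]
      ring
    rw [Finset.sum_congr rfl h1,
      swap_sums B M f (fun μ => (W μ * G μ) * (1 - ∏ i, lam n (μ i))) (E n)]
  -- Step B
  have stepB : ∑ k ∈ B, (f k)^2 = ∑ μ ∈ M, (W μ * G μ) * G μ := by
    have h1 : ∀ k ∈ B, (f k)^2 = f k * ∑ μ ∈ M, (W μ * G μ) * E n μ k := by
      intro k hk
      rw [pow_two, ← hrecon k (hmem k hk)]
    rw [Finset.sum_congr rfl h1, swap_sums B M f (fun μ => W μ * G μ) (E n)]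
  -- Step C
  have hE0 : ∀ k : Fin 3 → ℤ, E n (0 : Fin 3 → ℕ) k = 1 := by
    intro k
    unfold E ev
    simp
  have hG0 : G (0 : Fin 3 → ℕ) = 0 := by
    rw [hG]
    simp only [hE0, mul_one]
    exact hf
  -- Step D
  rw [ge_iff_le, stepA, stepB, Finset.mul_sum]
  apply Finset.sum_le_sum
  intro μ hμ
  by_cases hμ0 : μ = 0
  · subst hμ0
    rw [hG0]
    simp
  · have hμn : ∀ i, μ i < n := by
      intro i
      have := Fintype.mem_piFinset.1 hμ i
      exact Finset.mem_range.1 this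
    have hΛ : ∏ i, lam n (μ i) ≤ (1 + Real.cos (π/n))/2 := prod_lam_le hn hμn hμ0
    have hgap : (1 - Real.cos (π/n))/2 ≤ 1 - ∏ i, lam n (μ i) := by linarith
    have hWG : 0 ≤ W μ * (G μ * G μ) :=
      mul_nonneg (hWpos μ).le (mul_self_nonneg _)
    nlinarith [mul_le_mul_of_nonneg_right hgap hWG]
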